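/- Let a > 0 and let f, g : [0,a] → ℝ be continuous functions such that f is monotone nondecreasing on [0,a] and g is monotone nonincreasing on [0,a]. Then ∫₀ᵃ f(t)·g(t) dt ≤ ∫₀ᵃ f(t)·g(a−t) dt. -/
import Mathlib


open Real Set intervalIntegral

/-- Integral version of the permutation (rearrangement) inequality:
if `f` is nondecreasing and `g` is nonincreasing on `[0, a]`, then
`∫₀ᵃ f·g ≤ ∫₀ᵃ f(t)·g(a−t) dt`. -/
theorem integral_permutation_inequality
    (a : ℝ) (ha : 0 < a) (f g : ℝ → ℝ)
    (hfc : ContinuousOn f (Set.Icc 0 a)) (hgc : ContinuousOn g (Set.Icc 0 a))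
    (hf : MonotoneOn f (Set.Icc 0 a)) (hg : AntitoneOn g (Set.Icc 0 a)) :
    (∫ t in (0:ℝ)..a, f t * g t) ≤ ∫ t in (0:ℝ)..a, f t * g (a - t) := by
  have hmaps : Set.MapsTo (fun t : ℝ => a - t) (Set.Icc 0 a) (Set.Icc 0 a) := by
    intro t ht
    simp only [Set.mem_Icc] at ht ⊢
    constructor <;> linarith
  have hcs : ContinuousOn (fun t : ℝ => a - t) (Set.Icc 0 a) :=
    (continuous_const.sub continuous_id).continuousOn
  have hfc' : ContinuousOn (fun t => f (a - t)) (Set.Icc 0 a) := hfc.comp hcs hmaps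
  have hgc' : ContinuousOn (fun t => g (a - t)) (Set.Icc 0 a) := hgc.comp hcs hmaps
  have huIcc : Set.uIcc (0:ℝ) a = Set.Icc 0 a := Set.uIcc_of_le ha.le
  have int1 : IntervalIntegrable (fun t => f t * g t) MeasureTheory.volume 0 a := by
    apply ContinuousOn.intervalIntegrable; rw [huIcc]; exact hfc.mul hgc
  have int2 : IntervalIntegrable (fun t => f t * g (a - t)) MeasureTheory.volume 0 a := by
    apply ContinuousOn.intervalIntegrable; rw [huIcc]; exact hfc.mul hgc'
  have int3 : IntervalIntegrable (fun t => f (a - t) * g t) MeasureTheory.volume 0 a := by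
    apply ContinuousOn.intervalIntegrable; rw [huIcc]; exact hfc'.mul hgc
  have int4 : IntervalIntegrable (fun t => f (a - t) * g (a - t)) MeasureTheory.volume 0 a := by
    apply ContinuousOn.intervalIntegrable; rw [huIcc]; exact hfc'.mul hgc'
  -- substitution identities
  have sub1 : (∫ t in (0:ℝ)..a, f (a - t) * g (a - t)) = ∫ t in (0:ℝ)..a, f t * g t := by
    have := intervalIntegral.integral_comp_sub_left (a := (0:ℝ)) (b := a)
      (fun t => f t * g t) a
    simpa using this
  have sub2 : (∫ t in (0:ℝ)..a, f (a - t) * g t) = ∫ t in (0:ℝ)..a, f t * g (a - t) := by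
    have := intervalIntegral.integral_comp_sub_left (a := (0:ℝ)) (b := a)
      (fun t => f t * g (a - t)) a
    simpa [sub_sub_cancel] using this
  -- pointwise nonpositivity of (f t - f (a-t)) * (g t - g (a-t))
  have key : (∫ t in (0:ℝ)..a, (f t - f (a - t)) * (g t - g (a - t))) ≤ 0 := by
    have h0 : 0 ≤ ∫ t in (0:ℝ)..a, -((f t - f (a - t)) * (g t - g (a - t))) := by
      apply integral_nonneg ha.le
      intro t ht
      rw [neg_nonneg]
      have ht' : a - t ∈ Set.Icc (0:ℝ) a := hmaps ht
      rcases le_total t (a - t) with h | h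
      · have h1 : f t ≤ f (a - t) := hf ht ht' h
        have h2 : g (a - t) ≤ g t := hg ht ht' h
        exact mul_nonpos_of_nonpos_of_nonneg (by linarith) (by linarith)
      · have h1 : f (a - t) ≤ f t := hf ht' ht h
        have h2 : g t ≤ g (a - t) := hg ht' ht h
        exact mul_nonpos_of_nonneg_of_nonpos (by linarith) (by linarith)
    rw [intervalIntegral.integral_neg] at h0
    linarith
  have expand : (∫ t in (0:ℝ)..a, (f t - f (a - t)) * (g t - g (a - t)))
      = (∫ t in (0:ℝ)..a, f t * g t) - (∫ t in (0:ℝ)..a, f t * g (a - t))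
        - (∫ t in (0:ℝ)..a, f (a - t) * g t)
        + ∫ t in (0:ℝ)..a, f (a - t) * g (a - t) := by
    rw [← intervalIntegral.integral_sub int1 int2,
        ← intervalIntegral.integral_sub (int1.sub int2) int3,
        ← intervalIntegral.integral_add ((int1.sub int2).sub int3) int4]
    exact intervalIntegral.integral_congr fun t _ => by ring
  rw [expand, sub1, sub2] at key
  linarith
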